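/- The full relation X × Y is small if and only if X is finite or Y is finite. -/

import Mathlib

def IsSmall {X Y : Type*} (ρ : Set (X × Y)) : Prop :=
  ∀ Q ⊆ ρ, ∃ (n : ℕ) (A : Fin n → Set X) (B : Fin n → Set Y),
    Q = ρ ∩ ⋃ i, A i ×ˢ B i

theorem full_rel_small_iff {X Y : Type*} :
    IsSmall (Set.univ : Set (X × Y)) ↔ Finite X ∨ Finite Y := by
  constructor
  · intro hs
    by_contra hc
    push_neg at hc
    obtain ⟨hX, hY⟩ := hc
    set f := Infinite.natEmbedding X with hf
    set g := Infinite.natEmbedding Y with hg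
    set Q : Set (X × Y) := Set.range (fun k => (f k, g k)) with hQ
    obtain ⟨n, A, B, hAB⟩ := hs Q (Set.subset_univ _)
    rw [Set.univ_inter] at hAB
    have hsub : ∀ k : ℕ, (f k, g k) ∈ ⋃ i, A i ×ˢ B i := by
      intro k
      rw [← hAB]
      exact ⟨k, rfl⟩
    choose idx hidx using fun k => Set.mem_iUnion.mp (hsub k)
    obtain ⟨k, l, hkl, hne⟩ := Finite.exists_ne_map_eq_of_infinite idx
    have h1 := hidx k
    have h2 := hidx l
    rw [hne] at h1
    have : (f k, g l) ∈ A (idx l) ×ˢ B (idx l) := ⟨h1.1, h2.2⟩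
    have hmem : (f k, g l) ∈ Q := by
      rw [hAB]; exact Set.mem_iUnion.mpr ⟨idx l, this⟩
    obtain ⟨m, hm⟩ := hmem
    have hm1 : f m = f k := congrArg Prod.fst hm
    have hm2 : g m = g l := congrArg Prod.snd hm
    exact hkl (f.injective hm1 ▸ (g.injective hm2 ▸ rfl : m = l) ▸ rfl)
  · rintro (hX | hY)
    · intro Q _
      obtain ⟨n, ⟨e⟩⟩ := Finite.exists_equiv_fin X
      refine ⟨n, fun i => {e.symm i}, fun i => {y | (e.symm i, y) ∈ Q}, ?_⟩
      ext ⟨x, y⟩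
      simp only [Set.mem_inter_iff, Set.mem_univ, true_and, Set.mem_iUnion,
        Set.mem_prod, Set.mem_singleton_iff, Set.mem_setOf_eq]
      constructor
      · intro h; exact ⟨e x, by simp, by simpa using h⟩
      · rintro ⟨i, rfl, h⟩; exact h
    · intro Q _
      obtain ⟨n, ⟨e⟩⟩ := Finite.exists_equiv_fin Y
      refine ⟨n, fun i => {x | (x, e.symm i) ∈ Q}, fun i => {e.symm i}, ?_⟩
      ext ⟨x, y⟩
      simp only [Set.mem_inter_iff, Set.mem_univ, true_and, Set.mem_iUnion,
        Set.mem_prod, Set.mem_singleton_iff, Set.mem_setOf_eq]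
      constructor
      · intro h; exact ⟨e y, by simpa using h, by simp⟩
      · rintro ⟨i, h, rfl⟩; exact h
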